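/- Let p ≥ 1 and let F : ℝ^{N×n} → ℝ be positively p-homogeneous (F(λz) = λᵖ F(z) for all λ > 0). Suppose there exists a function θ : [0,∞) → ℝ with θ(t₀) > 0 for some t₀ ∈ (0,∞) such that ∫_{B₁(0)} F(∇φ) dx ≥ θ(∫_{B₁(0)} |∇φ|ᵖ dx) for all φ ∈ W₀^{1,p}(B₁(0); ℝᴺ). Then there exists a > 0 such that ∫_{B₁(0)} F(∇φ) dx ≥ a ∫_{B₁(0)} |∇φ|ᵖ dx for all φ ∈ W₀^{1,p}(B₁(0); ℝᴺ). -/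

import Mathlib

noncomputable section

open MeasureTheory Metric Set

/-- The gradient `∇φ(x)` of a map `φ : ℝⁿ → ℝᴺ`, viewed as an element of
`ℝ^{N×n}` with the Hilbert–Schmidt (Euclidean) norm, i.e. the matrix
`(∂_j φ^i (x))_{i,j}` as an element of `EuclideanSpace ℝ (Fin N × Fin n)`. -/
def gradHS {n N : ℕ} (φ : EuclideanSpace ℝ (Fin n) → EuclideanSpace ℝ (Fin N))
    (x : EuclideanSpace ℝ (Fin n)) : EuclideanSpace ℝ (Fin N × Fin n) :=
  (WithLp.equiv 2 ((Fin N × Fin n) → ℝ)).symm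
    fun p => fderiv ℝ φ x (EuclideanSpace.single p.2 1) p.1

/-- Test maps for `W₀^{1,p}(B₁(0); ℝᴺ)`: (continuously differentiable) maps compactly
supported in the open unit ball. -/
def ZeroBoundaryTest {n N : ℕ}
    (φ : EuclideanSpace ℝ (Fin n) → EuclideanSpace ℝ (Fin N)) : Prop :=
  ContDiff ℝ 1 φ ∧ HasCompactSupport φ ∧
    tsupport φ ⊆ Metric.ball (0 : EuclideanSpace ℝ (Fin n)) 1

lemma gradHS_const_smul {n N : ℕ} (φ : EuclideanSpace ℝ (Fin n) → EuclideanSpace ℝ (Fin N))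
    (hφ : ContDiff ℝ 1 φ) (c : ℝ) (x : EuclideanSpace ℝ (Fin n)) :
    gradHS (fun y => c • φ y) x = c • gradHS φ x := by
  have hd : DifferentiableAt ℝ φ x := (hφ.differentiable one_ne_zero) x
  have h1 : fderiv ℝ (fun y => c • φ y) x = c • fderiv ℝ φ x := fderiv_fun_const_smul hd c
  unfold gradHS
  ext q
  simp [h1]

lemma gradHS_continuous {n N : ℕ} (φ : EuclideanSpace ℝ (Fin n) → EuclideanSpace ℝ (Fin N))
    (hφ : ContDiff ℝ 1 φ) : Continuous (gradHS φ) := by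
  have hf : Continuous (fun x => fderiv ℝ φ x) := hφ.continuous_fderiv one_ne_zero
  apply (PiLp.continuous_toLp 2 fun _ : Fin N × Fin n => ℝ).comp
  apply continuous_pi
  intro q
  exact ((EuclideanSpace.proj q.1 : EuclideanSpace ℝ (Fin N) →L[ℝ] ℝ).continuous).comp
    (((ContinuousLinearMap.apply ℝ (EuclideanSpace ℝ (Fin N)) (EuclideanSpace.single q.2 (1:ℝ))).continuous).comp hf)


/-- If `F` is positively `p`-homogeneous and `∫_{B₁} F(∇φ) ≥ θ(∫_{B₁}|∇φ|ᵖ)` for some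
function `θ` with `θ(t₀) > 0` at some `t₀ > 0`, then there is `a > 0` with
`∫_{B₁} F(∇φ) ≥ a ∫_{B₁} |∇φ|ᵖ` for all admissible `φ`. -/
theorem homogeneous_coercivity_improvement
    (n N : ℕ) (p : ℝ) (hp : 1 ≤ p)
    (F : EuclideanSpace ℝ (Fin N × Fin n) → ℝ)
    (hFhom : ∀ lam : ℝ, 0 < lam → ∀ z, F (lam • z) = lam ^ p * F z)
    (θ : ℝ → ℝ) (t₀ : ℝ) (ht₀ : 0 < t₀) (hθ : 0 < θ t₀)
    (hcoer : ∀ φ, ZeroBoundaryTest φ →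
      θ (∫ x in Metric.ball (0 : EuclideanSpace ℝ (Fin n)) 1, ‖gradHS φ x‖ ^ p) ≤
        ∫ x in Metric.ball (0 : EuclideanSpace ℝ (Fin n)) 1, F (gradHS φ x)) :
    ∃ a : ℝ, 0 < a ∧ ∀ φ, ZeroBoundaryTest φ →
      a * ∫ x in Metric.ball (0 : EuclideanSpace ℝ (Fin n)) 1, ‖gradHS φ x‖ ^ p ≤
        ∫ x in Metric.ball (0 : EuclideanSpace ℝ (Fin n)) 1, F (gradHS φ x) := by
  have hp0 : (0:ℝ) < p := lt_of_lt_of_le one_pos hp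
  -- F 0 = 0
  have hF0 : F 0 = 0 := by
    have h2 := hFhom 2 (by norm_num) 0
    rw [smul_zero] at h2
    have h21 : (1:ℝ) < 2 ^ p := Real.one_lt_rpow_iff_of_pos (by norm_num) |>.2 (Or.inl ⟨by norm_num, hp0⟩)
    nlinarith
  refine ⟨θ t₀ / t₀, div_pos hθ ht₀, fun φ hφ => ?_⟩
  set μ := (volume : Measure (EuclideanSpace ℝ (Fin n)))
  set B := Metric.ball (0 : EuclideanSpace ℝ (Fin n)) 1
  set s := ∫ x in B, ‖gradHS φ x‖ ^ p with hs
  have hsnn : 0 ≤ s := by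
    apply integral_nonneg
    intro x
    positivity
  rcases eq_or_lt_of_le hsnn with hs0 | hspos
  · -- s = 0 : gradient vanishes a.e., so RHS is 0
    have hcont : Continuous fun x => ‖gradHS φ x‖ ^ p :=
      (gradHS_continuous φ hφ.1).norm.rpow_const fun x => Or.inr (le_of_lt hp0)
    have hint : IntegrableOn (fun x => ‖gradHS φ x‖ ^ p) B μ :=
      ((hcont.continuousOn).integrableOn_compact
        (isCompact_closedBall (0 : EuclideanSpace ℝ (Fin n)) 1)).mono_set
        ball_subset_closedBall
    have hae : (fun x => ‖gradHS φ x‖ ^ p) =ᶠ[ae (μ.restrict B)] 0 := by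
      rw [← integral_eq_zero_iff_of_nonneg (fun x => by positivity) hint]
      exact hs0.symm
    have haeF : (fun x => F (gradHS φ x)) =ᶠ[ae (μ.restrict B)] 0 := by
      filter_upwards [hae] with x hx
      have : ‖gradHS φ x‖ = 0 := by
        by_contra h
        have h1 : 0 < ‖gradHS φ x‖ := lt_of_le_of_ne (norm_nonneg _) (Ne.symm h)
        have : (0:ℝ) < ‖gradHS φ x‖ ^ p := Real.rpow_pos_of_pos h1 p
        simp only [Pi.zero_apply] at hx
        linarith
      have : gradHS φ x = 0 := norm_eq_zero.1 this
      simp [this, hF0]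
    have : ∫ x in B, F (gradHS φ x) = 0 := by
      rw [integral_congr_ae haeF]
      simp
    rw [this, ← hs0]
    simp
  · -- s > 0 : rescale
    set lam : ℝ := (t₀ / s) ^ (1 / p) with hlam
    have hlampos : 0 < lam := Real.rpow_pos_of_pos (div_pos ht₀ hspos) _
    have hlamp : lam ^ p = t₀ / s := by
      rw [hlam, ← Real.rpow_mul (div_pos ht₀ hspos).le, one_div_mul_cancel hp0.ne',
        Real.rpow_one]
    set ψ : EuclideanSpace ℝ (Fin n) → EuclideanSpace ℝ (Fin N) := fun y => lam • φ y with hψdef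
    have hsupp : tsupport ψ ⊆ tsupport φ :=
      closure_mono (Function.support_const_smul_subset lam φ)
    have hψ : ZeroBoundaryTest ψ :=
      ⟨hφ.1.const_smul lam,
        IsCompact.of_isClosed_subset hφ.2.1 isClosed_closure hsupp,
        hsupp.trans hφ.2.2⟩
    have hgrad : ∀ x, gradHS ψ x = lam • gradHS φ x := gradHS_const_smul φ hφ.1 lam
    have hInt1 : ∫ x in B, ‖gradHS ψ x‖ ^ p ∂μ = t₀ := by
      have hnorm : ∀ x, ‖gradHS ψ x‖ ^ p = lam ^ p * ‖gradHS φ x‖ ^ p := by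
        intro x
        rw [hgrad, norm_smul, Real.norm_eq_abs, abs_of_pos hlampos,
          Real.mul_rpow hlampos.le (norm_nonneg _)]
      simp_rw [hnorm]
      rw [MeasureTheory.integral_const_mul, hlamp, ← hs, div_mul_cancel₀ _ hspos.ne']
    have hInt2 : ∫ x in B, F (gradHS ψ x) ∂μ
        = (t₀ / s) * ∫ x in B, F (gradHS φ x) ∂μ := by
      have hFψ : ∀ x, F (gradHS ψ x) = lam ^ p * F (gradHS φ x) := by
        intro x
        rw [hgrad, hFhom lam hlampos]
      simp_rw [hFψ]
      rw [MeasureTheory.integral_const_mul, hlamp]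
    have h := hcoer ψ hψ
    rw [hInt1, hInt2] at h
    rw [div_mul_eq_mul_div, le_div_iff₀ hspos] at h
    rw [div_mul_eq_mul_div, div_le_iff₀ ht₀]
    linarith
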